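/- If the data values prescribed at all grid points and all derivative orders are zero, the unique Hermite interpolant is the zero polynomial: the Hermite basis polynomials H_{(a,k)}, for a ∈ A and k ∈ [0, ν(a) − 1], are linearly independent over the field k. -/
import Mathlib

open MvPolynomial

variable {k : Type*} [Field k] [CharZero k] [DecidableEq k]


/-- The univariate Hermite factor `H_{aᵢ}` placed in variable `i`. -/
noncomputable def hermiteFactor {n : ℕ} (A : Fin n → Finset k) (ν : Fin n → k → ℕ)
    (i : Fin n) (ai : k) : MvPolynomial (Fin n) k :=
  ∏ c ∈ (A i).erase ai, (C ((ai - c)⁻¹) * (X i - C c)) ^ ν i c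

/-- The multivariate Hermite basis polynomial `H_{(a,k)}`. -/
noncomputable def hermiteBasis {n : ℕ} (A : Fin n → Finset k) (ν : Fin n → k → ℕ)
    (a : Fin n → k) (m : Fin n → ℕ) : MvPolynomial (Fin n) k :=
  ∏ i, (C ((m i).factorial : k)⁻¹ * (X i - C (a i)) ^ (m i) *
      hermiteFactor A ν i (a i))

lemma taylor_coeff_zero_of_dvd {b : k} {s t : ℕ} {h : Polynomial k}
    (hd : (Polynomial.X - Polynomial.C b) ^ s ∣ h) (ht : t < s) :
    (Polynomial.taylor b h).coeff t = 0 := by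
  obtain ⟨r, rfl⟩ := hd
  rw [Polynomial.taylor_apply, Polynomial.mul_comp, Polynomial.pow_comp, Polynomial.sub_comp,
    Polynomial.X_comp, Polynomial.C_comp, add_sub_cancel_right,
    Polynomial.coeff_X_pow_mul', if_neg (not_le.mpr ht)]

lemma taylor_coeff_diag (b α : k) (t : ℕ) (r : Polynomial k) :
    (Polynomial.taylor b
      (Polynomial.C α * (Polynomial.X - Polynomial.C b) ^ t * r)).coeff t = α * r.eval b := by
  rw [Polynomial.taylor_apply, Polynomial.mul_comp, Polynomial.mul_comp, Polynomial.C_comp,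
    Polynomial.pow_comp, Polynomial.sub_comp, Polynomial.X_comp, Polynomial.C_comp,
    add_sub_cancel_right, mul_assoc, Polynomial.coeff_C_mul, Polynomial.coeff_X_pow_mul',
    if_pos le_rfl, Nat.sub_self, Polynomial.coeff_zero_eq_eval_zero, Polynomial.eval_comp,
    Polynomial.eval_add, Polynomial.eval_X, Polynomial.eval_C, zero_add]

lemma prod_monomial {n : ℕ} (u : Fin n → (Fin n →₀ ℕ)) (c : Fin n → k) :
    ∏ i, (monomial (u i) (c i) : MvPolynomial (Fin n) k)
      = monomial (∑ i, u i) (∏ i, c i) := by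
  induction (Finset.univ : Finset (Fin n)) using Finset.cons_induction with
  | empty => simp
  | cons a s ha ih => rw [Finset.prod_cons, Finset.sum_cons, Finset.prod_cons, ih, monomial_mul]

lemma coeff_prod_aeval {n : ℕ} (q : Fin n → Polynomial k) (m : Fin n → ℕ) :
    MvPolynomial.coeff (Finsupp.equivFunOnFinite.symm m)
        (∏ i, Polynomial.aeval (MvPolynomial.X i) (q i) : MvPolynomial (Fin n) k)
      = ∏ i, (q i).coeff (m i) := by
  have h1 : ∀ i, (Polynomial.aeval (MvPolynomial.X i) (q i) : MvPolynomial (Fin n) k)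
      = ∑ d ∈ (q i).support, monomial (Finsupp.single i d) ((q i).coeff d) := by
    intro i
    rw [Polynomial.aeval_def, Polynomial.eval₂_eq_sum, Polynomial.sum]
    refine Finset.sum_congr rfl fun d _ => ?_
    rw [algebraMap_eq, C_mul_X_pow_eq_monomial]
  simp_rw [h1]
  rw [Finset.prod_univ_sum]
  simp_rw [prod_monomial, MvPolynomial.coeff_sum, coeff_monomial]
  have key : ∀ p : Fin n → ℕ, (∑ i, Finsupp.single i (p i)) = Finsupp.equivFunOnFinite.symm p := by
    intro p
    have := Finsupp.univ_sum_single (Finsupp.equivFunOnFinite.symm p)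
    simpa using this
  simp_rw [key, EmbeddingLike.apply_eq_iff_eq]
  rw [Finset.sum_ite_eq' (Fintype.piFinset fun i => (q i).support) m
    (fun p => ∏ i, (q i).coeff (p i))]
  by_cases hmem : m ∈ Fintype.piFinset fun i => (q i).support
  · rw [if_pos hmem]
  · rw [if_neg hmem]
    rw [Fintype.mem_piFinset] at hmem
    push_neg at hmem
    obtain ⟨i, hi⟩ := hmem
    rw [Polynomial.notMem_support_iff] at hi
    exact (Finset.prod_eq_zero (Finset.mem_univ i) hi).symm

noncomputable def uFactor (S : Finset k) (νi : k → ℕ) (ai : k) : Polynomial k :=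
  ∏ c ∈ S.erase ai, (Polynomial.C ((ai - c)⁻¹) * (Polynomial.X - Polynomial.C c)) ^ νi c

noncomputable def uBasis (S : Finset k) (νi : k → ℕ) (ai : k) (mi : ℕ) : Polynomial k :=
  Polynomial.C ((mi.factorial : k)⁻¹) * (Polynomial.X - Polynomial.C ai) ^ mi * uFactor S νi ai

lemma uFactor_dvd {S : Finset k} {νi : k → ℕ} {ai c : k} (hc : c ∈ S.erase ai) :
    (Polynomial.X - Polynomial.C c) ^ νi c ∣ uFactor S νi ai := by
  refine dvd_trans ?_ (Finset.dvd_prod_of_mem _ hc)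
  rw [mul_pow]
  exact dvd_mul_left _ _

lemma uBasis_dvd_factor {S : Finset k} {νi : k → ℕ} {ai c : k} {mi : ℕ} (hc : c ∈ S.erase ai) :
    (Polynomial.X - Polynomial.C c) ^ νi c ∣ uBasis S νi ai mi :=
  (uFactor_dvd hc).trans (dvd_mul_left _ _)

lemma uBasis_dvd_self {S : Finset k} {νi : k → ℕ} {ai : k} {mi : ℕ} :
    (Polynomial.X - Polynomial.C ai) ^ mi ∣ uBasis S νi ai mi :=
  (dvd_mul_left _ _).trans (dvd_mul_right _ _)

lemma uFactor_eval {S : Finset k} {νi : k → ℕ} {ai : k} : (uFactor S νi ai).eval ai = 1 := by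
  rw [uFactor, Polynomial.eval_prod]
  refine Finset.prod_eq_one fun c hc => ?_
  have hne : ai - c ≠ 0 := sub_ne_zero.mpr (Finset.ne_of_mem_erase hc).symm
  simp [inv_mul_cancel₀ hne]

lemma taylor_uBasis_diag {S : Finset k} {νi : k → ℕ} (ai : k) (mi : ℕ) :
    (Polynomial.taylor ai (uBasis S νi ai mi)).coeff mi = ((mi.factorial : k))⁻¹ := by
  rw [uBasis, taylor_coeff_diag, uFactor_eval, mul_one]

lemma hermiteBasis_eq_prod {n : ℕ} (A : Fin n → Finset k) (ν : Fin n → k → ℕ)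
    (a : Fin n → k) (m : Fin n → ℕ) :
    hermiteBasis A ν a m
      = ∏ i, Polynomial.aeval (MvPolynomial.X i) (uBasis (A i) (ν i) (a i) (m i)) := by
  refine Finset.prod_congr rfl fun i _ => ?_
  simp only [uBasis, uFactor, hermiteFactor, map_mul, map_prod, map_pow, map_sub,
    Polynomial.aeval_X, Polynomial.aeval_C, algebraMap_eq]

lemma shift_aeval {n : ℕ} (a : Fin n → k) (i : Fin n) (q : Polynomial k) :
    MvPolynomial.aeval (fun j => MvPolynomial.X j + MvPolynomial.C (a j))
        (Polynomial.aeval (MvPolynomial.X i) q : MvPolynomial (Fin n) k)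
      = Polynomial.aeval (MvPolynomial.X i) (Polynomial.taylor (a i) q) := by
  rw [← Polynomial.aeval_algHom_apply
      ((MvPolynomial.aeval (fun j => MvPolynomial.X j + MvPolynomial.C (a j))) :
        MvPolynomial (Fin n) k →ₐ[k] MvPolynomial (Fin n) k) (MvPolynomial.X i) q,
    MvPolynomial.aeval_X, Polynomial.taylor_apply, Polynomial.aeval_comp]
  congr 1
  simp

lemma coeff_shift_hermite {n : ℕ} (A : Fin n → Finset k) (ν : Fin n → k → ℕ)
    (a b : Fin n → k) (m l : Fin n → ℕ) :
    MvPolynomial.coeff (Finsupp.equivFunOnFinite.symm m)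
        (MvPolynomial.aeval (fun j => MvPolynomial.X j + MvPolynomial.C (a j))
          (hermiteBasis A ν b l))
      = ∏ i, (Polynomial.taylor (a i) (uBasis (A i) (ν i) (b i) (l i))).coeff (m i) := by
  rw [hermiteBasis_eq_prod, map_prod]
  simp_rw [shift_aeval]
  rw [coeff_prod_aeval]

theorem hermite_basis_linear_independent
    {n : ℕ} (A : Fin n → Finset k) (ν : Fin n → k → ℕ)
    (hν : ∀ i, ∀ x ∈ A i, 1 ≤ ν i x) :
    LinearIndependent k
      (fun p : {q : (Fin n → k) × (Fin n → ℕ) //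
          (∀ i, q.1 i ∈ A i) ∧ ∀ i, q.2 i < ν i (q.1 i)} =>
        hermiteBasis A ν p.1.1 p.1.2) := by
  rw [linearIndependent_iff']
  intro s g hsum
  suffices H : ∀ N, ∀ p ∈ s, (∑ i, p.1.2 i) < N → g p = 0 by
    intro p hp
    exact H ((∑ i, p.1.2 i) + 1) p hp (Nat.lt_succ_self _)
  intro N
  induction N with
  | zero => exact fun p _ h => absurd h (Nat.not_lt_zero _)
  | succ N ih =>
    rintro ⟨⟨a, m⟩, ha, hm⟩ hp hN
    have h0 := congrArg (fun q : MvPolynomial (Fin n) k =>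
      MvPolynomial.coeff (Finsupp.equivFunOnFinite.symm m)
        (MvPolynomial.aeval (fun j => MvPolynomial.X j + MvPolynomial.C (a j)) q)) hsum
    simp only [map_sum, map_smul, MvPolynomial.coeff_sum, MvPolynomial.coeff_smul, map_zero,
      MvPolynomial.coeff_zero, smul_eq_mul] at h0
    have hsingle :
        ∑ q ∈ s, g q * MvPolynomial.coeff (Finsupp.equivFunOnFinite.symm m)
          (MvPolynomial.aeval (fun j => MvPolynomial.X j + MvPolynomial.C (a j))
            (hermiteBasis A ν q.1.1 q.1.2))
        = g ⟨(a, m), ha, hm⟩ * MvPolynomial.coeff (Finsupp.equivFunOnFinite.symm m)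
          (MvPolynomial.aeval (fun j => MvPolynomial.X j + MvPolynomial.C (a j))
            (hermiteBasis A ν a m)) := by
      refine Finset.sum_eq_single _ ?_ (fun hps => absurd hp hps)
      rintro ⟨⟨b, l⟩, hb, hl⟩ hq hne
      rw [coeff_shift_hermite]
      by_cases hba : b = a
      · subst hba
        by_cases hlm : ∀ i, l i ≤ m i
        · have hlne : l ≠ m := by
            rintro rfl
            exact hne rfl
          have hilt : ∃ i, l i < m i := by
            by_contra hc; push_neg at hc
            exact hlne (funext fun i => le_antisymm (hlm i) (hc i))
          have hsum_lt : (∑ i, l i) < N := by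
            have h1 : ∑ i, l i < ∑ i, m i :=
              Finset.sum_lt_sum (fun i _ => hlm i)
                (hilt.imp fun i h => ⟨Finset.mem_univ i, h⟩)
            simp only at hN
            omega
          rw [ih ⟨(b, l), hb, hl⟩ hq hsum_lt, zero_mul]
        · push_neg at hlm
          obtain ⟨i, hi⟩ := hlm
          have hz : (Polynomial.taylor (b i) (uBasis (A i) (ν i) (b i) (l i))).coeff (m i) = 0 :=
            taylor_coeff_zero_of_dvd uBasis_dvd_self hi
          rw [Finset.prod_eq_zero (Finset.mem_univ i) hz, mul_zero]
      · have hex : ∃ i, b i ≠ a i := by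
          by_contra hc; push_neg at hc
          exact hba (funext hc)
        obtain ⟨i, hi⟩ := hex
        have hmem : a i ∈ (A i).erase (b i) :=
          Finset.mem_erase.mpr ⟨fun h => hi h.symm, ha i⟩
        have hz : (Polynomial.taylor (a i) (uBasis (A i) (ν i) (b i) (l i))).coeff (m i) = 0 :=
          taylor_coeff_zero_of_dvd (uBasis_dvd_factor hmem) (hm i)
        rw [Finset.prod_eq_zero (Finset.mem_univ i) hz, mul_zero]
    rw [hsingle, coeff_shift_hermite] at h0
    simp only [taylor_uBasis_diag] at h0
    have hne0 : (∏ i, ((m i).factorial : k)⁻¹) ≠ 0 :=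
      Finset.prod_ne_zero_iff.mpr fun i _ =>
        inv_ne_zero (Nat.cast_ne_zero.mpr (Nat.factorial_ne_zero _))
    exact (mul_eq_zero.mp h0).resolve_right hne0
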